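/- Let 𝒫 = (P_1 | … | P_M) be a Fourier-reflexive partition of a finite abelian group G with dual 𝒫̂ = (Q_1 | … | Q_M), and let K ∈ ℂ^{M×M} be the Krawtchouk matrix of (𝒫̂, 𝒫), i.e., K_{m,ℓ} = Σ_{χ∈Q_ℓ} χ(g) for any g ∈ P_m. For a subgroup C ≤ Gⁿ define the symmetrized partition enumerator PE_{𝒫ⁿ_sym,C} = Σ_{g∈C} ∏_{t=1}^n Y_{m(g_t)} ∈ ℂ[Y_1, …, Y_M], where m(g_t) is the index with g_t ∈ P_{m(g_t)}; it is homogeneous of degree n and the coefficient of ∏_m Y_m^{s_m} equals |{g ∈ C : comp_𝒫(g) = (s_1,…,s_M)}|. Then PE_{(𝒫̂)ⁿ_sym,C^⊥} = (1/|C|) · ℳ''(PE_{𝒫ⁿ_sym,C}), where ℳ'' is the ℂ-algebra endomorphism of ℂ[Y_1,…,Y_M] determined by ℳ''(Y_m) = Σ_{ℓ=1}^M K_{m,ℓ} Y_ℓ. -/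

import Mathlib

open Finset
open scoped Classical

variable {G : Type*} [AddCommGroup G] [Fintype G]

/-- The `t`-th component of a character of `Gⁿ`, under the canonical identification of
the character group of `Gⁿ` with `Ĝⁿ`. -/
noncomputable def comp1 {n : ℕ} (χ : AddChar (Fin n → G) ℂ) (t : Fin n) : AddChar G ℂ :=
  χ.compAddMonoidHom (AddMonoidHom.single (fun _ : Fin n => G) t)

set_option linter.unusedSectionVars false

lemma addChar_map_sum {A M : Type*} [AddCommMonoid A] [CommMonoid M] (ψ : AddChar A M)
    {ι : Type*} (s : Finset ι) (f : ι → A) : ψ (∑ i ∈ s, f i) = ∏ i ∈ s, ψ (f i) := by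
  classical
  induction s using Finset.induction with
  | empty => simp
  | insert _ _ h ih =>
    rw [Finset.sum_insert h, Finset.prod_insert h, AddChar.map_add_eq_mul, ih]

/-- The character of `Gⁿ` determined by an `n`-tuple of characters of `G`. -/
noncomputable def prodChar {n : ℕ} (c : Fin n → AddChar G ℂ) : AddChar (Fin n → G) ℂ where
  toFun g := ∏ t, c t (g t)
  map_zero_eq_one' := by simp
  map_add_eq_mul' := by
    intro a b
    simp only [Pi.add_apply, AddChar.map_add_eq_mul]
    rw [Finset.prod_mul_distrib]

@[simp] lemma prodChar_apply {n : ℕ} (c : Fin n → AddChar G ℂ) (g : Fin n → G) :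
    prodChar c g = ∏ t, c t (g t) := rfl

lemma comp1_prodChar {n : ℕ} (c : Fin n → AddChar G ℂ) (t : Fin n) :
    comp1 (prodChar c) t = c t := by
  ext x
  simp only [comp1, AddChar.compAddMonoidHom_apply, AddMonoidHom.single_apply, prodChar_apply]
  rw [Fintype.prod_eq_single t]
  · simp
  · intro s hs
    rw [Pi.single_eq_of_ne hs, AddChar.map_zero_eq_one]

lemma prodChar_comp1 {n : ℕ} (χ : AddChar (Fin n → G) ℂ) :
    prodChar (fun t => comp1 χ t) = χ := by
  ext g
  simp only [prodChar_apply, comp1, AddChar.compAddMonoidHom_apply, AddMonoidHom.single_apply]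
  rw [← addChar_map_sum, Finset.univ_sum_single]

/-- The canonical identification of the character group of `Gⁿ` with `Ĝⁿ`, as a bijection. -/
noncomputable def prodCharEquiv (n : ℕ) : (Fin n → AddChar G ℂ) ≃ AddChar (Fin n → G) ℂ where
  toFun := prodChar
  invFun χ := fun t => comp1 χ t
  left_inv c := funext fun t => comp1_prodChar c t
  right_inv χ := prodChar_comp1 χ

/-- Orthogonality: summing a character over a subgroup. -/
lemma sum_char_subgroup {n : ℕ} (C : AddSubgroup (Fin n → G)) (χ : AddChar (Fin n → G) ℂ) :
    ∑ h : C, χ (h : Fin n → G) = if (∀ h ∈ C, χ h = 1) then (Nat.card C : ℂ) else 0 := by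
  classical
  have h1 : ∑ h : C, χ (h : Fin n → G) = ∑ h : C, (χ.compAddMonoidHom C.subtype) h := by simp
  have key : (χ.compAddMonoidHom C.subtype = 0) ↔ (∀ h ∈ C, χ h = 1) := by
    constructor
    · intro h g hg
      have := DFunLike.congr_fun h (⟨g, hg⟩ : C)
      simpa using this
    · intro h
      ext ⟨g, hg⟩
      simpa using h g hg
  rw [h1, AddChar.sum_eq_ite, Nat.card_eq_fintype_card]
  by_cases hc : ∀ h ∈ C, χ h = 1
  · rw [if_pos hc, if_pos (key.mpr hc)]
  · rw [if_neg hc, if_neg (fun h => hc (key.mp h))]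

lemma sum_ite_mem' {α M : Type*} [Fintype α] [AddCommMonoid M] (P : α → Prop) [DecidablePred P]
    (f : α → M) : (∑ x : α, if P x then f x else 0) = ∑ x : {x // P x}, f x := by
  rw [← Finset.sum_filter]
  exact Finset.sum_subtype _ (by simp) f

lemma prod_X_monomial {σ : Type*} {n : ℕ} (i : Fin n → σ) :
    (∏ t, (MvPolynomial.X (i t) : MvPolynomial σ ℂ)) =
      MvPolynomial.monomial (∑ t, Finsupp.single (i t) 1) 1 := by
  rw [MvPolynomial.monomial_sum_one]
  rfl

set_option maxHeartbeats 1000000 in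
/-- **MacWilliams identity for symmetrized partition enumerators.**
The fibers of `p` are the blocks of a Fourier-reflexive partition `𝒫` of `G` and the
fibers of `q` are the blocks of its dual partition `𝒫̂` (hypothesis `hdual`); `K` is the
Krawtchouk matrix of `(𝒫̂, 𝒫)`.  For a code `C ≤ Gⁿ`, the symmetrized partition enumerator
`PE` of `C` is homogeneous of degree `n`, the coefficient of `∏ Y_m ^ s_m` in `PE` is the
number of codewords with composition vector `s`, and the symmetrized partition enumerator
of the dual code `C^⊥` (w.r.t. `𝒫̂ⁿ_sym`) equals `|C|⁻¹` times the image of `PE` under the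
MacWilliams transformation `ℳ''`, the algebra homomorphism with
`ℳ''(Y_m) = Σ_ℓ K_{m,ℓ} Y_ℓ`. -/
theorem macwilliams_symmetrized_partition_enumerator
    {κ : Type*} [Fintype κ]
    (p : G → κ) (q : AddChar G ℂ → κ)
    (hp : Function.Surjective p) (hq : Function.Surjective q)
    (hdual : ∀ χ χ' : AddChar G ℂ,
      q χ = q χ' ↔ ∀ m : κ,
        (∑ g : G, if p g = m then χ g else 0) = (∑ g : G, if p g = m then χ' g else 0))
    (K : κ → κ → ℂ)
    (hK : ∀ (g : G) (ℓ : κ), K (p g) ℓ = ∑ᶠ χ : AddChar G ℂ, if q χ = ℓ then χ g else 0)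
    (n : ℕ) (C : AddSubgroup (Fin n → G))
    (PE PEdual : MvPolynomial κ ℂ)
    (hPE : PE = ∑ g : Fin n → G, if g ∈ C then ∏ t, MvPolynomial.X (p (g t)) else 0)
    (hPEdual : PEdual = ∑ᶠ χ : AddChar (Fin n → G) ℂ,
      if ∀ h ∈ C, χ h = 1 then ∏ t, MvPolynomial.X (q (comp1 χ t)) else 0) :
    PE.IsHomogeneous n ∧
    (∀ s : κ →₀ ℕ, (∑ m : κ, s m) = n →
      MvPolynomial.coeff s PE =
        (Nat.card {g : Fin n → G // g ∈ C ∧ ∀ m : κ,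
          (Finset.univ.filter fun t : Fin n => p (g t) = m).card = s m} : ℂ)) ∧
    PEdual = (Nat.card C : ℂ)⁻¹ •
      (MvPolynomial.aeval fun m : κ =>
        ∑ ℓ : κ, MvPolynomial.C (K m ℓ) * MvPolynomial.X ℓ) PE := by
  classical
  refine ⟨?_, ?_, ?_⟩
  · -- homogeneity
    rw [hPE]
    apply MvPolynomial.IsHomogeneous.sum
    intro g _
    by_cases hg : g ∈ C
    · rw [if_pos hg]
      have := MvPolynomial.IsHomogeneous.prod (Finset.univ (α := Fin n))
        (fun t => MvPolynomial.X (p (g t)) : Fin n → MvPolynomial κ ℂ) (fun _ => 1)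
        (fun t _ => MvPolynomial.isHomogeneous_X _ _)
      simpa using this
    · rw [if_neg hg]
      exact MvPolynomial.isHomogeneous_zero _ _ _
  · -- coefficients
    intro s hs
    have step : ∀ g : Fin n → G,
        MvPolynomial.coeff s (if g ∈ C then ∏ t, MvPolynomial.X (p (g t)) else 0)
        = if (g ∈ C ∧ ∀ m : κ,
            (Finset.univ.filter fun t : Fin n => p (g t) = m).card = s m) then (1 : ℂ) else 0 := by
      intro g
      by_cases hg : g ∈ C
      · rw [if_pos hg, prod_X_monomial, MvPolynomial.coeff_monomial]
        have hd : ((∑ t, Finsupp.single (p (g t)) 1) = s)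
            ↔ (∀ m : κ, (Finset.univ.filter fun t : Fin n => p (g t) = m).card = s m) := by
          rw [Finsupp.ext_iff]
          apply forall_congr'
          intro m
          have hval : (∑ t, Finsupp.single (p (g t)) 1) m
              = (Finset.univ.filter fun t : Fin n => p (g t) = m).card := by
            rw [Finsupp.finset_sum_apply]
            simp [Finsupp.single_apply]
          rw [hval]
        simp only [hg, true_and]
        exact if_congr hd rfl rfl
      · rw [if_neg hg, MvPolynomial.coeff_zero]
        simp [hg]
    rw [hPE, MvPolynomial.coeff_sum]
    calc ∑ g : Fin n → G,
          MvPolynomial.coeff s (if g ∈ C then ∏ t, MvPolynomial.X (p (g t)) else 0)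
        = ∑ g : Fin n → G, if (g ∈ C ∧ ∀ m : κ,
            (Finset.univ.filter fun t : Fin n => p (g t) = m).card = s m) then (1 : ℂ) else 0 :=
          Finset.sum_congr rfl fun g _ => step g
      _ = ((Finset.univ.filter fun g : Fin n → G => (g ∈ C ∧ ∀ m : κ,
            (Finset.univ.filter fun t : Fin n => p (g t) = m).card = s m)).card : ℂ) :=
          Finset.sum_boole _ _
      _ = _ := by
          rw [Nat.card_eq_fintype_card, Fintype.card_subtype]
  · -- MacWilliams identity
    have hinner : ∀ x : G, (∑ ℓ : κ, MvPolynomial.C (K (p x) ℓ) * MvPolynomial.X ℓ)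
        = ∑ χ : AddChar G ℂ, MvPolynomial.C (χ x) * MvPolynomial.X (q χ) := by
      intro x
      have hKx : ∀ ℓ : κ, K (p x) ℓ = ∑ χ : AddChar G ℂ, if q χ = ℓ then χ x else 0 := by
        intro ℓ; rw [hK x ℓ, finsum_eq_sum_of_fintype]
      calc ∑ ℓ : κ, MvPolynomial.C (K (p x) ℓ) * MvPolynomial.X ℓ
          = ∑ ℓ : κ, ∑ χ : AddChar G ℂ,
              (if q χ = ℓ then MvPolynomial.C (χ x) * MvPolynomial.X ℓ else 0) := by
            refine Finset.sum_congr rfl fun ℓ _ => ?_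
            rw [hKx, map_sum, Finset.sum_mul]
            exact Finset.sum_congr rfl fun χ _ => by split_ifs <;> simp
        _ = ∑ χ : AddChar G ℂ, ∑ ℓ : κ,
              (if q χ = ℓ then MvPolynomial.C (χ x) * MvPolynomial.X ℓ else 0) :=
            Finset.sum_comm
        _ = ∑ χ : AddChar G ℂ, MvPolynomial.C (χ x) * MvPolynomial.X (q χ) := by
            refine Finset.sum_congr rfl fun χ _ => ?_
            rw [Finset.sum_ite_eq]
            simp
    have hmain : (MvPolynomial.aeval fun m : κ =>
          ∑ ℓ : κ, MvPolynomial.C (K m ℓ) * MvPolynomial.X ℓ) PE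
        = MvPolynomial.C (Nat.card C : ℂ) *
          ∑ c : Fin n → AddChar G ℂ,
            (if (∀ h ∈ C, prodChar c h = 1) then ∏ t, MvPolynomial.X (q (c t)) else 0) := by
      rw [hPE, map_sum]
      calc ∑ g : Fin n → G, (MvPolynomial.aeval fun m : κ =>
              ∑ ℓ : κ, MvPolynomial.C (K m ℓ) * MvPolynomial.X ℓ)
              (if g ∈ C then ∏ t, MvPolynomial.X (p (g t)) else 0)
          = ∑ g : Fin n → G, if g ∈ C then
              ∏ t, ∑ χ : AddChar G ℂ, MvPolynomial.C (χ (g t)) * MvPolynomial.X (q χ) else 0 := by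
            refine Finset.sum_congr rfl fun g _ => ?_
            rw [apply_ite (MvPolynomial.aeval fun m : κ =>
              ∑ ℓ : κ, MvPolynomial.C (K m ℓ) * MvPolynomial.X ℓ), map_prod, map_zero]
            refine if_congr Iff.rfl ?_ rfl
            refine Finset.prod_congr rfl fun t _ => ?_
            rw [MvPolynomial.aeval_X]
            exact hinner (g t)
        _ = ∑ g : Fin n → G, ∑ c : Fin n → AddChar G ℂ, if g ∈ C then
              MvPolynomial.C (prodChar c g) * ∏ t, MvPolynomial.X (q (c t)) else 0 := by
            refine Finset.sum_congr rfl fun g _ => ?_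
            by_cases hg : g ∈ C
            · simp only [if_pos hg]
              rw [Finset.prod_univ_sum]
              rw [Fintype.piFinset_univ]
              refine Finset.sum_congr rfl fun c _ => ?_
              rw [prodChar_apply, Finset.prod_mul_distrib, map_prod]
            · simp [hg]
        _ = ∑ c : Fin n → AddChar G ℂ,
              (∑ g : Fin n → G, if g ∈ C then MvPolynomial.C (prodChar c g) else 0) *
                ∏ t, MvPolynomial.X (q (c t)) := by
            rw [Finset.sum_comm]
            refine Finset.sum_congr rfl fun c _ => ?_
            rw [Finset.sum_mul]
            exact Finset.sum_congr rfl fun g _ => by split_ifs <;> simp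
        _ = ∑ c : Fin n → AddChar G ℂ,
              (if (∀ h ∈ C, prodChar c h = 1) then MvPolynomial.C (Nat.card C : ℂ) else 0) *
                ∏ t, MvPolynomial.X (q (c t)) := by
            refine Finset.sum_congr rfl fun c _ => ?_
            congr 1
            rw [sum_ite_mem' (· ∈ C) (fun g => MvPolynomial.C (prodChar c g)), ← map_sum,
              sum_char_subgroup C (prodChar c), apply_ite MvPolynomial.C, map_zero]
        _ = MvPolynomial.C (Nat.card C : ℂ) *
              ∑ c : Fin n → AddChar G ℂ,
                (if (∀ h ∈ C, prodChar c h = 1) then ∏ t, MvPolynomial.X (q (c t)) else 0) := by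
            rw [Finset.mul_sum]
            exact Finset.sum_congr rfl fun c _ => by split_ifs <;> simp
    have hdualsum : PEdual = ∑ c : Fin n → AddChar G ℂ,
        (if (∀ h ∈ C, prodChar c h = 1) then ∏ t, MvPolynomial.X (q (c t)) else 0) := by
      rw [hPEdual, finsum_eq_sum_of_fintype]
      rw [← Equiv.sum_comp (prodCharEquiv (G := G) n)
        (fun χ => if ∀ h ∈ C, χ h = 1 then ∏ t, MvPolynomial.X (q (comp1 χ t)) else 0)]
      refine Finset.sum_congr rfl fun c _ => ?_
      have he : (prodCharEquiv (G := G) n) c = prodChar c := rfl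
      rw [he]
      refine if_congr Iff.rfl ?_ rfl
      refine Finset.prod_congr rfl fun t _ => ?_
      rw [comp1_prodChar]
    have hN : ((Nat.card C : ℂ)) ≠ 0 := by
      exact_mod_cast Nat.card_pos.ne'
    rw [hdualsum, hmain, MvPolynomial.smul_eq_C_mul, ← mul_assoc, ← map_mul,
      inv_mul_cancel₀ hN, map_one, one_mul]
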